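/- Starting from a configuration satisfying the state invariant, if the food particle does not change (is neither placed, removed, nor moved) from the current point on, then under the Adaptive α-Compression Algorithm the expected number of steps until a configuration with no residual components is reached is at most 2n²/(1−6p), where n is the number of particles and p<1/6 is the algorithm's fixed state-change probability. -/

import Mathlib

open scoped Classical ENNReal

noncomputable section

/-! ## The Adaptive α-Compression Algorithm of the paper, formalized.

Particles occupy distinct vertices of a `L × L` triangular-lattice torus (`N = L²` vertices).
Each occupied vertex carries one of six states: dispersion `D`, dispersion-token `DT`, or a
compression state `C g f` where `g` is the growth-token bit and `f` the food-adjacency bit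
(`C false false = C`, `C true false = C_G`, `C false true = C_F`, `C true true = C_{GF}`).
A single immobile food particle may occupy one (otherwise empty) vertex.

At each discrete step one occupied vertex is chosen uniformly at random and activated: it
performs the state-change step followed by the movement step of the algorithm, exactly as
described in the paper (with a fixed constant `p < 1/6` and bias parameter `λ > 1`).
The one-step transition is formalized as a `PMF` on configurations. -/

/-- Vertices of the `L × L` triangular-lattice torus. -/
abbrev V (L : ℕ) := ZMod L × ZMod L

/-- The six lattice directions. -/
def dirList (L : ℕ) : List (V L) :=
  [(1, 0), (-1, 0), (0, 1), (0, -1), (1, 1), (-1, -1)]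

def dirFinset (L : ℕ) : Finset (V L) := (dirList L).toFinset

lemma dirFinset_nonempty (L : ℕ) : (dirFinset L).Nonempty :=
  ⟨(1, 0), by simp [dirFinset, dirList]⟩

/-- The neighbours of a vertex. -/
def nbrs {L : ℕ} (v : V L) : Finset (V L) := (dirFinset L).image (fun d => v + d)

/-- Particle states: dispersion `D`, dispersion token `DT`, and the four compression
states `C (growth bit) (food bit)`. -/
inductive CState : Type
  | D : CState
  | DT : CState
  | C : Bool → Bool → CState
deriving DecidableEq

/-- A configuration: each vertex is empty or holds a particle with its state; a food
particle may occupy one vertex. -/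
structure Conf (L : ℕ) : Type where
  occ : V L → Option CState
  food : Option (V L)

variable {L : ℕ}

/-- `v` holds a particle in a compression state or the dispersion-token state. -/
def isTokenSite (c : Conf L) (v : V L) : Prop := ∃ s, c.occ v = some s ∧ s ≠ CState.D

/-- Cluster particles: compression-state particles, `DT`-state particles, and the food. -/
def isClusterSite (c : Conf L) (v : V L) : Prop := c.food = some v ∨ isTokenSite c v

/-- `v` is adjacent to the food particle. -/
def adjFood (c : Conf L) (v : V L) : Prop := ∃ f, c.food = some f ∧ f ∈ nbrs v

/-- Connectivity within the subgraph induced on compression-state and `DT`-state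
particles (the food particle belongs to no component). -/
def compReach (c : Conf L) : V L → V L → Prop :=
  Relation.ReflTransGen (fun a b => isTokenSite c a ∧ isTokenSite c b ∧ b ∈ nbrs a)

/-- The state invariant: every component (of compression-state and `DT`-state particles)
contains a particle in state `C_{GF}`, `C_F` or `DT`. -/
def StateInvariant (c : Conf L) : Prop :=
  ∀ v, isTokenSite c v → ∃ w, compReach c v w ∧
    (c.occ w = some CState.DT ∨ ∃ g, c.occ w = some (CState.C g true))

def setSt (c : Conf L) (v : V L) (s : CState) : Conf L :=
  ⟨Function.update c.occ v (some s), c.food⟩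

/-- Switch `v` to the dispersion state and all its compression-state neighbours to `DT`. -/
def spreadDT (c : Conf L) (v : V L) : Conf L :=
  ⟨fun w => if w = v then some CState.D
      else if w ∈ nbrs v ∧ ∃ g f, c.occ w = some (CState.C g f) then some CState.DT
      else c.occ w,
    c.food⟩

/-- Remove a growth token. -/
def clearG : Option CState → Option CState
  | some (CState.C _ f) => some (CState.C false f)
  | o => o

def moveP (c : Conf L) (v w : V L) (s : CState) : Conf L :=
  ⟨Function.update (Function.update c.occ v none) w (some s), c.food⟩

/-- The Bernoulli `PMF` with an `ℝ≥0∞` parameter (the older Mathlib's `bernoulliENN`). -/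
def bernoulliENN (p : ℝ≥0∞) (h : p ≤ 1) : PMF Bool :=
  PMF.ofFintype (fun b => cond b p (1 - p)) (by simp [h])

/-- Step 1 (state change) of the algorithm, for the activated particle at `v`. -/
def stateChange (p : ℝ≥0∞) (hp : p ≤ 1) (c : Conf L) (v : V L) : PMF (Conf L) :=
  match c.occ v with
  | none => PMF.pure c
  | some CState.D =>
      if adjFood c v then
        (bernoulliENN p hp).bind fun b =>
          PMF.pure (if b then setSt c v (CState.C false true) else c)
      else if hG : ((nbrs v).filter fun w => ∃ f, c.occ w = some (CState.C true f)).Nonempty then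
        (PMF.uniformOfFinset _ hG).bind fun w =>
          (bernoulliENN p hp).bind fun b =>
            PMF.pure (if b then
                setSt ⟨Function.update c.occ w (clearG (c.occ w)), c.food⟩ v
                  (CState.C false false)
              else c)
      else PMF.pure c
  | some CState.DT => PMF.pure (spreadDT c v)
  | some (CState.C g f) =>
      if (f = true ∧ ¬ adjFood c v) ∨ (f = false ∧ adjFood c v) ∨
          (adjFood c v ∧ ∃ w fd, c.food = some fd ∧ w ∈ nbrs v ∧ w ∈ nbrs fd ∧
            ∃ g', c.occ w = some (CState.C g' false)) then
        PMF.pure (spreadDT c v)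
      else if g then
        (PMF.uniformOfFinset (dirFinset L) (dirFinset_nonempty L)).bind fun d =>
          PMF.pure
            (match c.occ (v + d) with
              | some (CState.C false f') =>
                  setSt (setSt c v (CState.C false f)) (v + d) (CState.C true f')
              | _ => c)
      else if adjFood c v then
        (bernoulliENN p hp).bind fun b =>
          PMF.pure (if b then setSt c v (CState.C true f) else c)
      else PMF.pure c

/-- `N(ℓ ∪ ℓ')`. -/
def NNset (v w : V L) : Set (V L) := ((nbrs v : Set (V L)) ∪ (nbrs w : Set (V L))) \ {v, w}

/-- Connectivity between cluster particles through a set `A`. -/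
def connWithin (c : Conf L) (A : Set (V L)) : V L → V L → Prop :=
  Relation.ReflTransGen
    (fun a b => a ∈ A ∧ b ∈ A ∧ isClusterSite c a ∧ isClusterSite c b ∧ b ∈ nbrs a)

/-- Property 1 of valid compression moves. -/
def MoveProp1 (c : Conf L) (v w : V L) : Prop :=
  (nbrs v ∩ nbrs w).Nonempty ∧
    ∀ x ∈ NNset v w, isClusterSite c x →
      ∃ y ∈ nbrs v ∩ nbrs w, isClusterSite c y ∧ connWithin c (NNset v w) x y

/-- Property 2 of valid compression moves. -/
def MoveProp2 (c : Conf L) (v w : V L) : Prop :=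
  nbrs v ∩ nbrs w = ∅ ∧
  (∃ x ∈ nbrs v, isClusterSite c x) ∧ (∃ x ∈ nbrs w, isClusterSite c x) ∧
  (∀ x ∈ ((nbrs v : Set (V L)) \ {w}), ∀ y ∈ ((nbrs v : Set (V L)) \ {w}),
      isClusterSite c x → isClusterSite c y →
        connWithin c ((nbrs v : Set (V L)) \ {w}) x y) ∧
  (∀ x ∈ ((nbrs w : Set (V L)) \ {v}), ∀ y ∈ ((nbrs w : Set (V L)) \ {v}),
      isClusterSite c x → isClusterSite c y →
        connWithin c ((nbrs w : Set (V L)) \ {v}) x y)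

/-- A valid compression move from `v` to the adjacent empty non-food site `w`. -/
def validMove (c : Conf L) (v w : V L) : Prop :=
  w ∈ nbrs v ∧ c.occ w = none ∧ c.food ≠ some w ∧
    ((nbrs v).filter fun x => isClusterSite c x).card < 5 ∧
    (MoveProp1 c v w ∨ MoveProp2 c v w)

/-- `e(σ') - e(σ)`: the change in the number of edges between cluster particles caused by
moving the particle from `v` to `w` (computable locally). -/
def moveDelta (c : Conf L) (v w : V L) : ℤ :=
  (((nbrs w).filter fun x => x ≠ v ∧ isClusterSite c x).card : ℤ) -
    (((nbrs v).filter fun x => x ≠ w ∧ isClusterSite c x).card : ℤ)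

/-- Step 2 (movement) of the algorithm for the activated particle at `v`: dispersion
particles perform a simple-exclusion random-walk step; compression particles perform a
Metropolis-filtered valid compression move with probability `min(1, λ^{e(σ')-e(σ)})`, and
afterwards set their food bit according to food adjacency. -/
def movement (lam : ℝ) (c : Conf L) (v : V L) : PMF (Conf L) :=
  match c.occ v with
  | some CState.D =>
      (PMF.uniformOfFinset (dirFinset L) (dirFinset_nonempty L)).bind fun d =>
        PMF.pure
          (if c.occ (v + d) = none ∧ c.food ≠ some (v + d) then moveP c v (v + d) CState.D
           else c)
  | some (CState.C g _) =>
      (PMF.uniformOfFinset (dirFinset L) (dirFinset_nonempty L)).bind fun d =>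
        if validMove c v (v + d) then
          (bernoulliENN (min 1 (ENNReal.ofReal (lam ^ moveDelta c v (v + d))))
              (min_le_left _ _)).bind fun b =>
            PMF.pure
              (if b then
                  moveP c v (v + d) (CState.C g (if adjFood c (v + d) then true else false))
                else setSt c v (CState.C g (if adjFood c v then true else false)))
        else PMF.pure (setSt c v (CState.C g (if adjFood c v then true else false)))
  | _ => PMF.pure c

variable [NeZero L]

/-- The set of occupied (particle) vertices. -/
def occupiedSet (c : Conf L) : Finset (V L) :=
  Finset.univ.filter fun v => (c.occ v).isSome

/-- The number of particles. -/
def pcount (c : Conf L) : ℕ := (occupiedSet c).card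

/-- One step of the Adaptive α-Compression Algorithm: a uniformly random particle is
activated and performs its state-change step followed by its movement step.  The food
particle never changes during algorithm steps. -/
def compStep (p : ℝ≥0∞) (hp : p ≤ 1) (lam : ℝ) (c : Conf L) : PMF (Conf L) :=
  if h : (occupiedSet c).Nonempty then
    (PMF.uniformOfFinset _ h).bind fun v =>
      (stateChange p hp c v).bind fun c' => movement lam c' v
  else PMF.pure c

/-- `surviveP step goal t a` is the probability that a Markov chain with one-step kernel
`step` started at `a` has not visited the goal set within the first `t` steps. -/
def surviveP {α : Type*} (step : α → PMF α) (goal : α → Prop) : ℕ → α → ℝ≥0∞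
  | 0, a => if goal a then 0 else 1
  | t + 1, a => if goal a then 0 else ∑' b, step a b * surviveP step goal t b

/-- The expected hitting time of the goal set for the Markov chain with kernel `step`
started at `a`: `E[T] = ∑_{t ≥ 0} P(T > t)` (in `ℝ≥0∞`). -/
def ehit {α : Type*} (step : α → PMF α) (goal : α → Prop) (a : α) : ℝ≥0∞ :=
  ∑' t, surviveP step goal t a

end

/-- A residual particle witness: a `DT`-state particle, a compression particle with the food
bit set that is not adjacent to food, or a compression particle without the food bit set
that is adjacent to food.  (A residual component is exactly a component containing such a
particle, so "no residual components" is equivalent to "no such particle exists".) -/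
def badParticle {L : ℕ} (c : Conf L) (v : V L) : Prop :=
  c.occ v = some CState.DT ∨
  (∃ g, c.occ v = some (CState.C g true) ∧ ¬ adjFood c v) ∨
  (∃ g, c.occ v = some (CState.C g false) ∧ adjFood c v)

/-- The configuration has no residual components. -/
def NoResidual {L : ℕ} (c : Conf L) : Prop := ∀ v, ¬ badParticle c v

noncomputable section AuxPEV

/-- Expected value of `f` under a `PMF`. -/
def pev {α : Type*} (μ : PMF α) (f : α → ℝ≥0∞) : ℝ≥0∞ := ∑' a, μ a * f a

lemma pev_pure {α : Type*} (a : α) (f : α → ℝ≥0∞) : pev (PMF.pure a) f = f a := by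
  rw [pev, tsum_eq_single a (fun b hb => by simp [PMF.pure_apply, hb])]
  simp [PMF.pure_apply]

lemma pev_bind {α β : Type*} (μ : PMF α) (g : α → PMF β) (f : β → ℝ≥0∞) :
    pev (μ.bind g) f = pev μ fun a => pev (g a) f := by
  simp only [pev, PMF.bind_apply]
  calc ∑' b, (∑' a, μ a * g a b) * f b
      = ∑' b, ∑' a, μ a * (g a b * f b) := by
        refine tsum_congr fun b => ?_
        rw [← ENNReal.tsum_mul_right]
        exact tsum_congr fun a => mul_assoc _ _ _
    _ = ∑' a, ∑' b, μ a * (g a b * f b) := ENNReal.tsum_comm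
    _ = ∑' a, μ a * ∑' b, g a b * f b := tsum_congr fun a => ENNReal.tsum_mul_left

lemma pev_congr {α : Type*} {μ : PMF α} {f h : α → ℝ≥0∞}
    (he : ∀ a ∈ μ.support, f a = h a) : pev μ f = pev μ h := by
  refine tsum_congr fun a => ?_
  by_cases ha : μ a = 0
  · simp [ha]
  · rw [he a ha]

lemma pev_le_pev {α : Type*} {μ : PMF α} {f h : α → ℝ≥0∞}
    (he : ∀ a ∈ μ.support, f a ≤ h a) : pev μ f ≤ pev μ h := by
  refine ENNReal.tsum_le_tsum fun a => ?_
  by_cases ha : μ a = 0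
  · simp [ha]
  · exact mul_le_mul_right (he a ha) _

lemma pev_const {α : Type*} (μ : PMF α) (x : ℝ≥0∞) : pev μ (fun _ => x) = x := by
  rw [pev, ENNReal.tsum_mul_right, PMF.tsum_coe, one_mul]

lemma pev_le_const {α : Type*} {μ : PMF α} {f : α → ℝ≥0∞} {x : ℝ≥0∞}
    (he : ∀ a ∈ μ.support, f a ≤ x) : pev μ f ≤ x := by
  calc pev μ f ≤ pev μ (fun _ => x) := pev_le_pev he
    _ = x := pev_const μ x

lemma pev_uniform {α : Type*} (s : Finset α) (hs : s.Nonempty) (f : α → ℝ≥0∞) :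
    pev (PMF.uniformOfFinset s hs) f = (∑ a ∈ s, f a) / s.card := by
  rw [pev, tsum_eq_sum (s := s) (fun a ha => by
    simp [PMF.uniformOfFinset_apply, ha])]
  rw [Finset.sum_congr rfl (fun a ha => by rw [PMF.uniformOfFinset_apply, if_pos ha]),
    ← Finset.mul_sum, div_eq_mul_inv, mul_comm]

lemma pev_uniform_const {α : Type*} {s : Finset α} (hs : s.Nonempty) {f : α → ℝ≥0∞}
    {x : ℝ≥0∞} (h : ∀ a ∈ s, f a = x) : pev (PMF.uniformOfFinset s hs) f = x := by
  rw [pev_uniform, Finset.sum_congr rfl h, Finset.sum_const, nsmul_eq_mul, mul_div_assoc,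
    ENNReal.mul_div_cancel (by exact_mod_cast Finset.card_ne_zero.mpr hs)
      (ENNReal.natCast_ne_top _)]

lemma pev_bernoulli (q : ℝ≥0∞) (hq : q ≤ 1) (f : Bool → ℝ≥0∞) :
    pev (bernoulliENN q hq) f = q * f true + (1 - q) * f false := by
  rw [pev, tsum_bool]
  simp [bernoulliENN, add_comm]

lemma pev_bernoulli_const (q : ℝ≥0∞) (hq : q ≤ 1) (x : ℝ≥0∞) {f : Bool → ℝ≥0∞}
    (h : ∀ b, f b = x) : pev (bernoulliENN q hq) f = x := by
  rw [pev_bernoulli, h, h, ← add_mul, add_comm, tsub_add_cancel_of_le hq, one_mul]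

lemma pev_bernoulli_le (q : ℝ≥0∞) (hq : q ≤ 1) {f : Bool → ℝ≥0∞} {x : ℝ≥0∞}
    (ht : f true ≤ x + 1) (hf : f false ≤ x) :
    pev (bernoulliENN q hq) f ≤ x + q := by
  rw [pev_bernoulli]
  calc q * f true + (1 - q) * f false ≤ q * (x + 1) + (1 - q) * x := by
        exact add_le_add (mul_le_mul_right ht q) (mul_le_mul_right hf _)
    _ = (q + (1 - q)) * x + q := by ring
    _ = x + q := by rw [add_comm q, tsub_add_cancel_of_le hq, one_mul]

end AuxPEV


noncomputable section AuxHit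

/-- Truncated potential process. -/
def gpot {α : Type*} (step : α → PMF α) (goal : α → Prop) (Φ : α → ℝ≥0∞) : ℕ → α → ℝ≥0∞
  | 0, a => if goal a then 0 else Φ a
  | t + 1, a => if goal a then 0 else ∑' b, step a b * gpot step goal Φ t b

lemma ehit_le_of_drift {α : Type*} (step : α → PMF α) (goal : α → Prop)
    (I : α → Prop) (Φ : α → ℝ≥0∞) (ε B : ℝ≥0∞) (hε0 : ε ≠ 0) (hεt : ε ≠ ∞)
    (hclosed : ∀ a, I a → ∀ b ∈ (step a).support, I b)
    (hdrift : ∀ a, I a → ¬ goal a → (∑' b, step a b * Φ b) + ε ≤ Φ a)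
    (a0 : α) (hI : I a0) (hB : Φ a0 ≤ B) :
    ehit step goal a0 ≤ B / ε := by
  have key : ∀ t a, I a →
      gpot step goal Φ (t + 1) a + ε * surviveP step goal t a ≤ gpot step goal Φ t a := by
    intro t
    induction t with
    | zero =>
      intro a ha
      by_cases hg : goal a
      · simp [gpot, surviveP, hg]
      · simp only [gpot, surviveP, if_neg hg, mul_one]
        refine le_trans (add_le_add_left ?_ ε) (hdrift a ha hg)
        refine ENNReal.tsum_le_tsum fun b => mul_le_mul_right ?_ _
        by_cases hgb : goal b <;> simp [gpot, hgb]
    | succ t ih =>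
      intro a ha
      by_cases hg : goal a
      · simp [gpot, surviveP, hg]
      · simp only [gpot, surviveP, if_neg hg]
        rw [← ENNReal.tsum_mul_left, ← ENNReal.tsum_add]
        refine le_trans (ENNReal.tsum_le_tsum fun b => ?_) le_rfl
        by_cases hb : step a b = 0
        · simp [hb]
        · calc step a b * gpot step goal Φ (t + 1) b + ε * (step a b * surviveP step goal t b)
              = step a b * (gpot step goal Φ (t + 1) b + ε * surviveP step goal t b) := by ring
            _ ≤ step a b * gpot step goal Φ t b :=
              mul_le_mul_right (ih b (hclosed a ha b hb)) _
  have tele : ∀ T, gpot step goal Φ T a0 + ε * ∑ t ∈ Finset.range T, surviveP step goal t a0 ≤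
      Φ a0 := by
    intro T
    induction T with
    | zero =>
      simp only [Finset.range_zero, Finset.sum_empty, mul_zero, add_zero]
      by_cases hg : goal a0 <;> simp [gpot, hg]
    | succ T ih =>
      rw [Finset.sum_range_succ, mul_add, ← add_assoc]
      calc gpot step goal Φ (T + 1) a0 + ε * ∑ t ∈ Finset.range T, surviveP step goal t a0 +
            ε * surviveP step goal T a0
          = (gpot step goal Φ (T + 1) a0 + ε * surviveP step goal T a0) +
            ε * ∑ t ∈ Finset.range T, surviveP step goal t a0 := by ring
        _ ≤ gpot step goal Φ T a0 + ε * ∑ t ∈ Finset.range T, surviveP step goal t a0 :=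
            add_le_add_left (key T a0 hI) _
        _ ≤ Φ a0 := ih
  have hsum : ∀ T, ε * ∑ t ∈ Finset.range T, surviveP step goal t a0 ≤ B :=
    fun T => le_trans (le_trans le_add_self (tele T)) hB
  have : ε * ehit step goal a0 ≤ B := by
    rw [ehit, ENNReal.tsum_eq_iSup_sum, ENNReal.mul_iSup]
    refine iSup_le fun s => ?_
    obtain ⟨T, hT⟩ := s.exists_nat_subset_range
    exact le_trans (mul_le_mul_right
      (Finset.sum_le_sum_of_subset hT) ε) (hsum T)
  rw [ENNReal.le_div_iff_mul_le (Or.inl hε0) (Or.inl hεt)]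
  rwa [mul_comm]

end AuxHit


noncomputable section AuxPhi

lemma sum_split_two {M : Type*} [AddCommMonoid M] {ι : Type*} [Fintype ι] [DecidableEq ι]
    (f g : ι → M) {v w : ι} (hvw : v ≠ w)
    (hoff : ∀ u, u ≠ v → u ≠ w → f u = g u) (hsum : f v + f w = g v + g w) :
    ∑ u, f u = ∑ u, g u := by
  have hw : w ∈ Finset.univ.erase v := Finset.mem_erase.mpr ⟨Ne.symm hvw, Finset.mem_univ w⟩
  rw [← Finset.add_sum_erase _ f (Finset.mem_univ v),
    ← Finset.add_sum_erase _ g (Finset.mem_univ v),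
    ← Finset.add_sum_erase _ f hw, ← Finset.add_sum_erase _ g hw, ← add_assoc, ← add_assoc,
    hsum]
  congr 1
  refine Finset.sum_congr rfl fun u hu => ?_
  rw [Finset.mem_erase, Finset.mem_erase] at hu
  exact hoff u hu.2.1 hu.1

/-- Local weight: `1` for each compression/`DT` particle plus `1` for a growth token. -/
def wgt : Option CState → ℝ≥0∞
  | some CState.DT => 1
  | some (CState.C g _) => if g then 2 else 1
  | _ => 0

lemma wgt_le_two (o : Option CState) : wgt o ≤ 2 := by
  rcases o with _ | s
  · exact zero_le
  · cases s with
    | D => exact zero_le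
    | DT => exact one_le_two
    | C g f => rcases g <;> simp [wgt]

lemma wgt_ne_top (o : Option CState) : wgt o ≠ ∞ :=
  ne_top_of_le_ne_top ENNReal.ofNat_ne_top (wgt_le_two o)

lemma one_le_wgt_C (g f : Bool) : 1 ≤ wgt (some (CState.C g f)) := by
  rcases g <;> simp [wgt]

lemma wgt_C_eq (g f f' : Bool) : wgt (some (CState.C g f)) = wgt (some (CState.C g f')) := rfl

lemma wgt_clearG_le (o : Option CState) : wgt (clearG o) ≤ wgt o := by
  rcases o with _ | s
  · exact le_rfl
  · cases s with
    | D => exact le_rfl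
    | DT => exact le_rfl
    | C g f => rcases g <;> simp [clearG, wgt]

lemma clearG_isSome (o : Option CState) : (clearG o).isSome = o.isSome := by
  rcases o with _ | s
  · rfl
  · cases s <;> rfl

variable {L : ℕ} [NeZero L]

/-- The potential function: number of non-dispersion particles plus growth tokens. -/
def phi (c : Conf L) : ℝ≥0∞ := ∑ v, wgt (c.occ v)

lemma phi_ne_top (c : Conf L) : phi c ≠ ∞ := by
  refine (lt_of_le_of_lt (Finset.sum_le_sum fun v _ => wgt_le_two (c.occ v)) ?_).ne
  simp only [Finset.sum_const, nsmul_eq_mul]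
  exact ENNReal.mul_lt_top (ENNReal.natCast_lt_top _) (lt_top_iff_ne_top.mpr ENNReal.ofNat_ne_top)

lemma phi_le_two_pcount (c : Conf L) : phi c ≤ 2 * pcount c := by
  have : phi c ≤ ∑ v, (if (c.occ v).isSome then 2 else 0) := by
    refine Finset.sum_le_sum fun v _ => ?_
    by_cases h : (c.occ v).isSome
    · simp only [if_pos h]; exact wgt_le_two _
    · simp only [if_neg h]
      rcases Option.not_isSome_iff_eq_none.mp h with h'
      rw [h']; exact le_rfl
  refine this.trans ?_
  rw [Finset.sum_ite, Finset.sum_const, Finset.sum_const_zero, add_zero, nsmul_eq_mul,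
    mul_comm]
  unfold pcount occupiedSet
  exact le_rfl

lemma phi_eq_of_wgt_eq {c c' : Conf L} (h : ∀ v, wgt (c'.occ v) = wgt (c.occ v)) :
    phi c' = phi c :=
  Finset.sum_congr rfl fun v _ => h v

lemma phi_two_point {c c' : Conf L} {v w : V L} (hvw : v ≠ w)
    (hoff : ∀ u, u ≠ v → u ≠ w → c'.occ u = c.occ u)
    (hsum : wgt (c'.occ v) + wgt (c'.occ w) = wgt (c.occ v) + wgt (c.occ w)) :
    phi c' = phi c :=
  sum_split_two _ _ hvw (fun u h1 h2 => by rw [hoff u h1 h2]) hsum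

lemma phi_setSt_add (c : Conf L) (v : V L) (s : CState) :
    phi (setSt c v s) + wgt (c.occ v) = phi c + wgt (some s) := by
  unfold phi setSt
  simp only
  rw [← Finset.add_sum_erase _ (fun u => wgt (Function.update c.occ v (some s) u))
      (Finset.mem_univ v),
    ← Finset.add_sum_erase _ (fun u => wgt (c.occ u)) (Finset.mem_univ v),
    Function.update_self]
  have : ∑ u ∈ Finset.univ.erase v, wgt (Function.update c.occ v (some s) u) =
      ∑ u ∈ Finset.univ.erase v, wgt (c.occ u) := by
    refine Finset.sum_congr rfl fun u hu => ?_
    rw [Function.update_of_ne (Finset.mem_erase.mp hu).1]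
  rw [this]
  ring

lemma phi_setSt_eq {c : Conf L} {v : V L} {s : CState} (h : wgt (some s) = wgt (c.occ v)) :
    phi (setSt c v s) = phi c := by
  have := phi_setSt_add c v s
  rw [h] at this
  have h2 : wgt (c.occ v) + phi (setSt c v s) = wgt (c.occ v) + phi c := by
    rw [add_comm (wgt (c.occ v)), add_comm (wgt (c.occ v))]; exact this
  exact (ENNReal.cancel_of_ne (wgt_ne_top (c.occ v))).inj.mp h2

lemma phi_setSt_le {c : Conf L} {v : V L} {s : CState} (h : wgt (some s) ≤ wgt (c.occ v) + 1) :
    phi (setSt c v s) ≤ phi c + 1 := by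
  have h1 := phi_setSt_add c v s
  have h2 : phi (setSt c v s) + wgt (c.occ v) ≤ (phi c + 1) + wgt (c.occ v) := by
    rw [h1]
    calc phi c + wgt (some s) ≤ phi c + (wgt (c.occ v) + 1) := add_le_add_right h _
      _ = phi c + 1 + wgt (c.occ v) := by ring
  exact (ENNReal.add_le_add_iff_right (wgt_ne_top _)).mp h2

lemma phi_spreadDT_le (c : Conf L) (v : V L) : phi (spreadDT c v) ≤ phi c := by
  refine Finset.sum_le_sum fun u _ => ?_
  unfold spreadDT
  simp only
  by_cases h1 : u = v
  · rw [if_pos h1]; exact zero_le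
  · rw [if_neg h1]
    by_cases h2 : u ∈ nbrs v ∧ ∃ g f, c.occ u = some (CState.C g f)
    · rw [if_pos h2]
      obtain ⟨_, g, f, hg⟩ := h2
      rw [hg]
      exact one_le_wgt_C g f
    · rw [if_neg h2]

lemma phi_spreadDT_succ_le {c : Conf L} {v : V L} (h1 : 1 ≤ wgt (c.occ v)) :
    phi (spreadDT c v) + 1 ≤ phi c := by
  unfold phi
  rw [← Finset.add_sum_erase _ (fun u => wgt ((spreadDT c v).occ u)) (Finset.mem_univ v),
    ← Finset.add_sum_erase _ (fun u => wgt (c.occ u)) (Finset.mem_univ v)]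
  have hv : wgt ((spreadDT c v).occ v) = 0 := by
    unfold spreadDT
    simp [wgt]
  rw [hv, zero_add]
  have : ∑ u ∈ Finset.univ.erase v, wgt ((spreadDT c v).occ u) ≤
      ∑ u ∈ Finset.univ.erase v, wgt (c.occ u) := by
    refine Finset.sum_le_sum fun u hu => ?_
    have h2 : u ≠ v := (Finset.mem_erase.mp hu).1
    unfold spreadDT
    simp only [if_neg h2]
    by_cases h3 : u ∈ nbrs v ∧ ∃ g f, c.occ u = some (CState.C g f)
    · rw [if_pos h3]
      obtain ⟨_, g, f, hg⟩ := h3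
      rw [hg]
      exact one_le_wgt_C g f
    · rw [if_neg h3]
  calc ∑ u ∈ Finset.univ.erase v, wgt ((spreadDT c v).occ u) + 1 ≤
      ∑ u ∈ Finset.univ.erase v, wgt (c.occ u) + 1 := add_le_add_left this 1
    _ ≤ ∑ u ∈ Finset.univ.erase v, wgt (c.occ u) + wgt (c.occ v) := add_le_add_right h1 _
    _ = wgt (c.occ v) + ∑ u ∈ Finset.univ.erase v, wgt (c.occ u) := add_comm _ _

lemma phi_moveP {c : Conf L} {v w : V L} {s : CState} (hw : c.occ w = none)
    (hv : (c.occ v).isSome) (hs : wgt (some s) = wgt (c.occ v)) :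
    phi (moveP c v w s) = phi c := by
  have hvw : v ≠ w := by
    intro h
    rw [h, hw] at hv
    simp at hv
  refine phi_two_point hvw (fun u h1 h2 => ?_) ?_
  · unfold moveP
    simp only [Function.update_of_ne h2, Function.update_of_ne h1]
  · unfold moveP
    simp only [Function.update_self, Function.update_of_ne hvw, Function.update_self]
    rw [hw, hs]
    simp [wgt]

end AuxPhi

noncomputable section AuxPcount

variable {L : ℕ} [NeZero L]

lemma pcount_eq_sum (c : Conf L) :
    pcount c = ∑ v, if (c.occ v).isSome then 1 else 0 := by
  unfold pcount occupiedSet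
  rw [Finset.card_filter]

lemma pcount_congr {c c' : Conf L} (h : ∀ v, (c'.occ v).isSome = (c.occ v).isSome) :
    pcount c' = pcount c := by
  rw [pcount_eq_sum, pcount_eq_sum]
  exact Finset.sum_congr rfl fun v _ => by rw [h v]

lemma pcount_setSt {c : Conf L} {v : V L} (h : (c.occ v).isSome) (s : CState) :
    pcount (setSt c v s) = pcount c := by
  refine pcount_congr fun u => ?_
  unfold setSt
  simp only
  by_cases hu : u = v
  · subst hu
    rw [Function.update_self, h]
    rfl
  · rw [Function.update_of_ne hu]

lemma pcount_spreadDT {c : Conf L} {v : V L} (h : (c.occ v).isSome) :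
    pcount (spreadDT c v) = pcount c := by
  refine pcount_congr fun u => ?_
  unfold spreadDT
  simp only
  by_cases h1 : u = v
  · subst h1
    rw [if_pos rfl, h]
    rfl
  · rw [if_neg h1]
    by_cases h2 : u ∈ nbrs v ∧ ∃ g f, c.occ u = some (CState.C g f)
    · rw [if_pos h2]
      obtain ⟨_, g, f, hg⟩ := h2
      rw [hg]
      rfl
    · rw [if_neg h2]

lemma pcount_clearG (c : Conf L) (w : V L) :
    pcount (⟨Function.update c.occ w (clearG (c.occ w)), c.food⟩ : Conf L) = pcount c := by
  refine pcount_congr fun u => ?_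
  by_cases hu : u = w
  · subst hu
    simp only [Function.update_self, clearG_isSome]
  · simp only [Function.update_of_ne hu]

lemma pcount_moveP {c : Conf L} {v w : V L} (hw : c.occ w = none) (hv : (c.occ v).isSome)
    (s : CState) : pcount (moveP c v w s) = pcount c := by
  have hvw : v ≠ w := by
    intro h
    rw [h, hw] at hv
    simp at hv
  rw [pcount_eq_sum, pcount_eq_sum]
  refine sum_split_two _ _ hvw (fun u h1 h2 => ?_) ?_
  · unfold moveP
    simp only [Function.update_of_ne h2, Function.update_of_ne h1]
  · unfold moveP
    simp only [Function.update_self, Function.update_of_ne hvw, Function.update_self]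
    rw [hw, hv]
    simp

lemma supp_stateChange {p : ℝ≥0∞} {hp : p ≤ 1} {c : Conf L} {v : V L} {c' : Conf L}
    (h : c' ∈ (stateChange p hp c v).support) : pcount c' = pcount c := by
  unfold stateChange at h
  split at h
  · -- none
    rw [PMF.mem_support_pure_iff] at h; subst h; rfl
  · -- D
    rename_i hocc
    have hv : (c.occ v).isSome := by rw [hocc]; rfl
    split at h
    · rw [PMF.mem_support_bind_iff] at h
      obtain ⟨b, -, h⟩ := h
      rw [PMF.mem_support_pure_iff] at h; subst h
      cases b
      · rfl
      · exact pcount_setSt hv _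
    · split at h
      · rw [PMF.mem_support_bind_iff] at h
        obtain ⟨w, hw, h⟩ := h
        rw [PMF.mem_support_uniformOfFinset_iff] at hw
        rw [Finset.mem_filter] at hw
        obtain ⟨-, f, hwC⟩ := hw
        rw [PMF.mem_support_bind_iff] at h
        obtain ⟨b, -, h⟩ := h
        rw [PMF.mem_support_pure_iff] at h; subst h
        cases b
        · rfl
        · have hvw : v ≠ w := by
            intro he
            rw [he, hwC] at hocc
            exact CState.noConfusion (Option.some.inj hocc)
          have hv' : ((⟨Function.update c.occ w (clearG (c.occ w)), c.food⟩ : Conf L).occ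
              v).isSome := by
            simp only [Function.update_of_ne hvw]
            exact hv
          exact (pcount_setSt hv' (CState.C false false)).trans (pcount_clearG c w)
      · rw [PMF.mem_support_pure_iff] at h; subst h; rfl
  · -- DT
    rename_i hocc
    have hv : (c.occ v).isSome := by rw [hocc]; rfl
    rw [PMF.mem_support_pure_iff] at h; subst h
    exact pcount_spreadDT hv
  · -- C g f
    rename_i g f hocc
    have hv : (c.occ v).isSome := by rw [hocc]; rfl
    split at h
    · rw [PMF.mem_support_pure_iff] at h; subst h
      exact pcount_spreadDT hv
    · split at h
      · rw [PMF.mem_support_bind_iff] at h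
        obtain ⟨d, -, h⟩ := h
        rw [PMF.mem_support_pure_iff] at h; subst h
        split
        · rename_i f' hd
          have hsome : ((setSt c v (CState.C false f)).occ (v + d)).isSome := by
            unfold setSt
            simp only
            by_cases he : v + d = v
            · rw [he, Function.update_self]; rfl
            · rw [Function.update_of_ne he, hd]; rfl
          rw [pcount_setSt hsome, pcount_setSt hv]
        · rfl
      · split at h
        · rw [PMF.mem_support_bind_iff] at h
          obtain ⟨b, -, h⟩ := h
          rw [PMF.mem_support_pure_iff] at h; subst h
          cases b
          · rfl
          · exact pcount_setSt hv _
        · rw [PMF.mem_support_pure_iff] at h; subst h; rfl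

lemma supp_movement {lam : ℝ} {c : Conf L} {v : V L} {c' : Conf L}
    (h : c' ∈ (movement lam c v).support) : pcount c' = pcount c := by
  unfold movement at h
  split at h
  · -- D
    rename_i hocc
    have hv : (c.occ v).isSome := by rw [hocc]; rfl
    rw [PMF.mem_support_bind_iff] at h
    obtain ⟨d, -, h⟩ := h
    rw [PMF.mem_support_pure_iff] at h; subst h
    split
    · rename_i hcond
      exact pcount_moveP hcond.1 hv _
    · rfl
  · -- C g f
    rename_i g f hocc
    have hv : (c.occ v).isSome := by rw [hocc]; rfl
    rw [PMF.mem_support_bind_iff] at h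
    obtain ⟨d, -, h⟩ := h
    split at h
    · rename_i hvalid
      rw [PMF.mem_support_bind_iff] at h
      obtain ⟨b, -, h⟩ := h
      rw [PMF.mem_support_pure_iff] at h; subst h
      cases b
      · exact pcount_setSt hv _
      · exact pcount_moveP hvalid.2.1 hv _
    · rw [PMF.mem_support_pure_iff] at h; subst h
      exact pcount_setSt hv _
  · rw [PMF.mem_support_pure_iff] at h; subst h; rfl

lemma supp_compStep {p : ℝ≥0∞} {hp : p ≤ 1} {lam : ℝ} {c : Conf L} {c' : Conf L}
    (h : c' ∈ (compStep p hp lam c).support) : pcount c' = pcount c := by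
  unfold compStep at h
  split at h
  · rw [PMF.mem_support_bind_iff] at h
    obtain ⟨v, -, h⟩ := h
    rw [PMF.mem_support_bind_iff] at h
    obtain ⟨c1, h1, h2⟩ := h
    rw [supp_movement h2, supp_stateChange h1]
  · rw [PMF.mem_support_pure_iff] at h; subst h; rfl

end AuxPcount

noncomputable section AuxDrift

variable {L : ℕ} [NeZero L]

lemma pev_movement (lam : ℝ) (c : Conf L) (v : V L) :
    pev (movement lam c v) phi = phi c := by
  unfold movement
  split
  · -- dispersion particle
    rename_i hocc
    rw [pev_bind]
    refine pev_uniform_const _ fun d hd => ?_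
    rw [pev_pure]
    split
    · rename_i hcond
      exact phi_moveP hcond.1 (by rw [hocc]; rfl) (by rw [hocc])
    · rfl
  · -- compression particle
    rename_i g f hocc
    rw [pev_bind]
    refine pev_uniform_const _ fun d hd => ?_
    split
    · rename_i hvalid
      rw [pev_bind]
      refine pev_bernoulli_const _ _ (phi c) fun b => ?_
      rw [pev_pure]
      cases b
      · exact phi_setSt_eq (by rw [hocc]; exact wgt_C_eq g _ f)
      · exact phi_moveP hvalid.2.1 (by rw [hocc]; rfl) (by rw [hocc]; exact wgt_C_eq g _ f)
    · rw [pev_pure]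
      exact phi_setSt_eq (by rw [hocc]; exact wgt_C_eq g _ f)
  · rw [pev_pure]

lemma phi_growthJoin {c : Conf L} {v w : V L} {f : Bool}
    (hocc : c.occ v = some CState.D) (hw : c.occ w = some (CState.C true f)) :
    phi (setSt (⟨Function.update c.occ w (clearG (c.occ w)), c.food⟩ : Conf L) v
        (CState.C false false)) = phi c := by
  have hvw : v ≠ w := by
    intro h
    rw [h, hw] at hocc
    simp at hocc
  refine phi_two_point hvw (fun u h1 h2 => ?_) ?_
  · show Function.update (Function.update c.occ w (clearG (c.occ w))) v
      (some (CState.C false false)) u = c.occ u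
    rw [Function.update_of_ne h1, Function.update_of_ne h2]
  · show wgt (Function.update (Function.update c.occ w (clearG (c.occ w))) v
        (some (CState.C false false)) v) +
      wgt (Function.update (Function.update c.occ w (clearG (c.occ w))) v
        (some (CState.C false false)) w) = wgt (c.occ v) + wgt (c.occ w)
    rw [Function.update_self, Function.update_of_ne (Ne.symm hvw), Function.update_self,
      hw, hocc]
    simp [wgt, clearG]
    norm_num

lemma phi_growthPass {c : Conf L} {v u : V L} {f f' : Bool}
    (hocc : c.occ v = some (CState.C true f)) (hu : c.occ u = some (CState.C false f')) :
    phi (setSt (setSt c v (CState.C false f)) u (CState.C true f')) = phi c := by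
  have hvu : v ≠ u := by
    intro h
    rw [h, hu] at hocc
    simp at hocc
  refine phi_two_point hvu (fun x h1 h2 => ?_) ?_
  · show Function.update (Function.update c.occ v (some (CState.C false f))) u
      (some (CState.C true f')) x = c.occ x
    rw [Function.update_of_ne h2, Function.update_of_ne h1]
  · show wgt (Function.update (Function.update c.occ v (some (CState.C false f))) u
        (some (CState.C true f')) v) +
      wgt (Function.update (Function.update c.occ v (some (CState.C false f))) u
        (some (CState.C true f')) u) = wgt (c.occ v) + wgt (c.occ u)
    rw [Function.update_of_ne hvu, Function.update_self, Function.update_self, hocc, hu]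
    simp [wgt]
    norm_num

lemma pev_stateChange_le (p : ℝ≥0∞) (hp : p ≤ 1) (c : Conf L) (v : V L) :
    pev (stateChange p hp c v) phi ≤ phi c + (if adjFood c v then p else 0) := by
  unfold stateChange
  split
  · rw [pev_pure]
    exact self_le_add_right _ _
  · -- dispersion particle
    rename_i hocc
    split
    · rename_i hadj
      rw [pev_bind]
      refine pev_bernoulli_le p hp ?_ ?_
      · rw [pev_pure]
        exact phi_setSt_le (by rw [hocc]; simp [wgt])
      · rw [pev_pure]
        exact le_rfl
    · split
      · rename_i hG
        rw [pev_bind]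
        refine le_trans (le_of_eq (pev_uniform_const _ fun w hw => ?_))
          (self_le_add_right _ _)
        rw [Finset.mem_filter] at hw
        obtain ⟨-, f, hwC⟩ := hw
        rw [pev_bind]
        refine pev_bernoulli_const _ _ (phi c) fun b => ?_
        rw [pev_pure]
        cases b
        · rfl
        · exact phi_growthJoin hocc hwC
      · rw [pev_pure]
        exact self_le_add_right _ _
  · -- dispersion token
    rw [pev_pure]
    exact le_trans (phi_spreadDT_le c v) (self_le_add_right _ _)
  · -- compression particle
    rename_i g f hocc
    split
    · rw [pev_pure]
      exact le_trans (phi_spreadDT_le c v) (self_le_add_right _ _)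
    · split
      · rename_i hg
        rw [pev_bind]
        refine le_trans (le_of_eq (pev_uniform_const _ fun d hd => ?_))
          (self_le_add_right _ _)
        rw [pev_pure]
        split
        · rename_i f' hmatch
          have hocc' : c.occ v = some (CState.C true f) := by rw [hocc, hg]
          exact phi_growthPass hocc' hmatch
        · rfl
      · split
        · rename_i hadj
          rw [pev_bind]
          refine pev_bernoulli_le p hp ?_ ?_
          · rw [pev_pure]
            refine phi_setSt_le ?_
            rw [hocc]
            calc wgt (some (CState.C true f)) ≤ 2 := wgt_le_two _
              _ = 1 + 1 := one_add_one_eq_two.symm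
              _ ≤ wgt (some (CState.C g f)) + 1 := add_le_add_left (one_le_wgt_C g f) 1
          · rw [pev_pure]
            exact le_rfl
        · rw [pev_pure]
          exact self_le_add_right _ _

lemma pev_stateChange_bad {p : ℝ≥0∞} {hp : p ≤ 1} {c : Conf L} {v : V L}
    (hb : badParticle c v) : pev (stateChange p hp c v) phi + 1 ≤ phi c := by
  rcases hb with hDT | ⟨g, hC, hnadj⟩ | ⟨g, hC, hadj⟩
  · unfold stateChange
    split
    · rename_i heq; rw [heq] at hDT; simp at hDT
    · rename_i heq; rw [heq] at hDT; simp at hDT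
    · rw [pev_pure]
      exact phi_spreadDT_succ_le (by rw [hDT]; exact le_rfl)
    · rename_i g f heq; rw [heq] at hDT; simp at hDT
  · unfold stateChange
    split
    · rename_i heq; rw [heq] at hC; simp at hC
    · rename_i heq; rw [heq] at hC; simp at hC
    · rename_i heq; rw [heq] at hC; simp at hC
    · rename_i g' f' heq
      rw [heq] at hC
      simp only [Option.some.injEq, CState.C.injEq] at hC
      obtain ⟨hg, hf⟩ := hC
      rw [if_pos (Or.inl ⟨hf, hnadj⟩), pev_pure]
      exact phi_spreadDT_succ_le (by rw [heq]; exact one_le_wgt_C g' f')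
  · unfold stateChange
    split
    · rename_i heq; rw [heq] at hC; simp at hC
    · rename_i heq; rw [heq] at hC; simp at hC
    · rename_i heq; rw [heq] at hC; simp at hC
    · rename_i g' f' heq
      rw [heq] at hC
      simp only [Option.some.injEq, CState.C.injEq] at hC
      obtain ⟨hg, hf⟩ := hC
      rw [if_pos (Or.inr (Or.inl ⟨hf, hadj⟩)), pev_pure]
      exact phi_spreadDT_succ_le (by rw [heq]; exact one_le_wgt_C g' f')

lemma dir_neg_mem {d : V L} (hd : d ∈ dirFinset L) : -d ∈ dirFinset L := by
  simp only [dirFinset, dirList, List.mem_toFinset, List.mem_cons, List.not_mem_nil,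
    or_false] at hd ⊢
  rcases hd with rfl | rfl | rfl | rfl | rfl | rfl <;> simp [Prod.ext_iff]

lemma adjFood_card_le (c : Conf L) :
    (Finset.univ.filter fun v => adjFood c v).card ≤ 6 := by
  rcases hf : c.food with _ | fd
  · have : (Finset.univ.filter fun v => adjFood c v) = ∅ := by
      refine Finset.filter_eq_empty_iff.mpr fun v _ => ?_
      rintro ⟨f', hf', -⟩
      rw [hf] at hf'
      exact Option.some_ne_none _ hf'.symm
    rw [this]
    exact Nat.zero_le 6
  · have hsub : (Finset.univ.filter fun v => adjFood c v) ⊆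
        (dirFinset L).image (fun d => fd + d) := by
      intro x hx
      rw [Finset.mem_filter] at hx
      obtain ⟨-, f', hf', hmem⟩ := hx
      rw [hf] at hf'
      obtain rfl : fd = f' := Option.some.inj hf'
      rw [nbrs, Finset.mem_image] at hmem
      obtain ⟨d, hd, hxd⟩ := hmem
      refine Finset.mem_image.mpr ⟨-d, dir_neg_mem hd, ?_⟩
      rw [← hxd]
      ring
    calc (Finset.univ.filter fun v => adjFood c v).card
        ≤ ((dirFinset L).image (fun d => fd + d)).card := Finset.card_le_card hsub
      _ ≤ (dirFinset L).card := Finset.card_image_le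
      _ ≤ 6 := (List.toFinset_card_le _)

lemma drift_compStep {p : ℝ≥0∞} {hp : p ≤ 1} (hp6 : p < 1 / 6) {lam : ℝ} {c : Conf L}
    {n : ℕ} (hn : pcount c ≤ n) (hbad : ¬ NoResidual c) :
    (∑' b, compStep p hp lam c b * phi b) + (1 - 6 * p) / (n : ℝ≥0∞) ≤ phi c := by
  obtain ⟨v0, hv0⟩ : ∃ v, badParticle c v := by
    by_contra hcon
    push_neg at hcon
    exact hbad fun v => hcon v
  have hv0occ : (c.occ v0).isSome := by
    rcases hv0 with h | ⟨g, h, -⟩ | ⟨g, h, -⟩ <;> rw [h] <;> rfl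
  have hv0mem : v0 ∈ occupiedSet c :=
    Finset.mem_filter.mpr ⟨Finset.mem_univ _, hv0occ⟩
  have hne : (occupiedSet c).Nonempty := ⟨v0, hv0mem⟩
  have hm1 : 1 ≤ pcount c := Finset.card_pos.mpr hne
  have hm0 : (pcount c : ℝ≥0∞) ≠ 0 := by
    simp only [ne_eq, Nat.cast_eq_zero]
    omega
  have hmtop : (pcount c : ℝ≥0∞) ≠ ∞ := ENNReal.natCast_ne_top _
  have h6p : 6 * p ≤ 1 := by
    calc 6 * p ≤ 6 * (1 / 6) := mul_le_mul_right hp6.le 6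
      _ = 1 := by
        rw [ENNReal.mul_div_cancel (by norm_num) (by norm_num)]
  have h6pt : 6 * p ≠ ∞ := ne_top_of_le_ne_top ENNReal.one_ne_top h6p
  -- rewrite the expectation as a finite average
  have hstep : (∑' b, compStep p hp lam c b * phi b) =
      (∑ v ∈ occupiedSet c, pev (stateChange p hp c v) phi) / (pcount c : ℝ≥0∞) := by
    show pev (compStep p hp lam c) phi = _
    unfold compStep
    rw [dif_pos hne, pev_bind, pev_uniform]
    congr 1
    refine Finset.sum_congr rfl fun v hv => ?_
    rw [pev_bind]
    exact pev_congr fun c1 _ => pev_movement lam c1 v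
  -- bound the sum of per-site expectations
  have hsum : (∑ v ∈ occupiedSet c, pev (stateChange p hp c v) phi) + 1 ≤
      (pcount c : ℝ≥0∞) * phi c + 6 * p := by
    rw [← Finset.add_sum_erase _ _ hv0mem]
    have h2 : ∑ v ∈ (occupiedSet c).erase v0, pev (stateChange p hp c v) phi ≤
        ((pcount c - 1 : ℕ) : ℝ≥0∞) * phi c + 6 * p := by
      calc ∑ v ∈ (occupiedSet c).erase v0, pev (stateChange p hp c v) phi
          ≤ ∑ v ∈ (occupiedSet c).erase v0, (phi c + if adjFood c v then p else 0) :=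
            Finset.sum_le_sum fun v _ => pev_stateChange_le p hp c v
        _ = ((occupiedSet c).erase v0).card * phi c +
            ∑ v ∈ (occupiedSet c).erase v0, (if adjFood c v then p else 0) := by
            rw [Finset.sum_add_distrib, Finset.sum_const, nsmul_eq_mul]
        _ ≤ ((pcount c - 1 : ℕ) : ℝ≥0∞) * phi c + 6 * p := by
            refine add_le_add (le_of_eq ?_) ?_
            · rw [Finset.card_erase_of_mem hv0mem]
              rfl
            · have heq : ∑ v ∈ (occupiedSet c).erase v0, (if adjFood c v then p else 0) =
                  ∑ v ∈ ((occupiedSet c).erase v0).filter (fun v => adjFood c v), p :=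
                (Finset.sum_filter _ _).symm
              rw [heq, Finset.sum_const, nsmul_eq_mul]
              refine mul_le_mul_left ?_ p
              have hsub : ((occupiedSet c).erase v0).filter (fun v => adjFood c v) ⊆
                  Finset.univ.filter (fun v => adjFood c v) :=
                Finset.filter_subset_filter _ (Finset.subset_univ _)
              calc ((((occupiedSet c).erase v0).filter fun v => adjFood c v).card : ℝ≥0∞)
                  ≤ ((Finset.univ.filter fun v => adjFood c v).card : ℝ≥0∞) := by
                    exact_mod_cast Finset.card_le_card hsub
                _ ≤ 6 := by exact_mod_cast adjFood_card_le c
    calc pev (stateChange p hp c v0) phi +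
          (∑ v ∈ (occupiedSet c).erase v0, pev (stateChange p hp c v) phi) + 1
        = (pev (stateChange p hp c v0) phi + 1) +
          ∑ v ∈ (occupiedSet c).erase v0, pev (stateChange p hp c v) phi := by ring
      _ ≤ phi c + (((pcount c - 1 : ℕ) : ℝ≥0∞) * phi c + 6 * p) :=
          add_le_add (pev_stateChange_bad hv0) h2
      _ = (1 + ((pcount c - 1 : ℕ) : ℝ≥0∞)) * phi c + 6 * p := by ring
      _ = (pcount c : ℝ≥0∞) * phi c + 6 * p := by
          congr 2
          exact_mod_cast (by omega : 1 + (pcount c - 1) = pcount c)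
  have hS : (∑ v ∈ occupiedSet c, pev (stateChange p hp c v) phi) + (1 - 6 * p) ≤
      (pcount c : ℝ≥0∞) * phi c := by
    rw [← ENNReal.add_le_add_iff_right h6pt, add_assoc, tsub_add_cancel_of_le h6p]
    exact hsum
  rw [hstep]
  calc (∑ v ∈ occupiedSet c, pev (stateChange p hp c v) phi) / (pcount c : ℝ≥0∞) +
        (1 - 6 * p) / (n : ℝ≥0∞)
      ≤ (∑ v ∈ occupiedSet c, pev (stateChange p hp c v) phi) / (pcount c : ℝ≥0∞) +
        (1 - 6 * p) / (pcount c : ℝ≥0∞) :=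
        add_le_add_right (ENNReal.div_le_div_left (by exact_mod_cast hn) _) _
    _ = ((∑ v ∈ occupiedSet c, pev (stateChange p hp c v) phi) + (1 - 6 * p)) /
        (pcount c : ℝ≥0∞) := ENNReal.div_add_div_same
    _ ≤ ((pcount c : ℝ≥0∞) * phi c) / (pcount c : ℝ≥0∞) :=
        ENNReal.div_le_div_right hS _
    _ = phi c := by
        rw [mul_div_assoc, ENNReal.mul_div_cancel hm0 hmtop]

end AuxDrift



/-! **Statement 6.**
Starting from a configuration satisfying the state invariant, if the food particle does not
change from the current point on (algorithm steps never change the food), then under the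
Adaptive α-Compression Algorithm the expected number of steps until a configuration with no
residual components is reached is at most `2 n² / (1 - 6 p)`, where `n` is the number of
particles and `p < 1/6` is the algorithm's fixed state-change probability. -/
theorem residual_components_vanish
    (p : ℝ≥0∞) (hp : p ≤ 1) (hp0 : 0 < p) (hp6 : p < 1 / 6) (lam : ℝ) (hlam : 1 < lam)
    (L : ℕ) [NeZero L] (c0 : Conf L) (hinv : StateInvariant c0) :
    ehit (compStep p hp lam) (fun c : Conf L => NoResidual c) c0 ≤
      2 * (pcount c0 : ℝ≥0∞) ^ 2 / (1 - 6 * p) := by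
  by_cases h0 : NoResidual c0
  · have hz : ∀ t, surviveP (compStep p hp lam) (fun c : Conf L => NoResidual c) t c0 = 0 := by
      intro t
      cases t <;> simp [surviveP, h0]
    rw [ehit]
    simp [hz]
  · have hex : ∃ v, badParticle c0 v := by
      by_contra hcon
      push_neg at hcon
      exact h0 fun v => hcon v
    obtain ⟨v0, hv0⟩ := hex
    have hocc : (c0.occ v0).isSome := by
      rcases hv0 with h | ⟨g, h, -⟩ | ⟨g, h, -⟩ <;> rw [h] <;> rfl
    have hn1 : 1 ≤ pcount c0 :=
      Finset.card_pos.mpr ⟨v0, Finset.mem_filter.mpr ⟨Finset.mem_univ _, hocc⟩⟩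
    have hn0 : ((pcount c0 : ℝ≥0∞)) ≠ 0 := by
      simp only [ne_eq, Nat.cast_eq_zero]
      omega
    have hnt : ((pcount c0 : ℝ≥0∞)) ≠ ∞ := ENNReal.natCast_ne_top _
    have h6p1 : 6 * p < 1 := by
      calc 6 * p < 6 * (1 / 6) := by
            refine ENNReal.mul_lt_mul_right (by norm_num) (by norm_num) ?_
            exact hp6
        _ = 1 := by rw [ENNReal.mul_div_cancel (by norm_num) (by norm_num)]
    have hε0 : (1 - 6 * p) / (pcount c0 : ℝ≥0∞) ≠ 0 := by
      rw [ne_eq, ENNReal.div_eq_zero_iff]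
      push_neg
      exact ⟨(tsub_pos_of_lt h6p1).ne', hnt⟩
    have hεt : (1 - 6 * p) / (pcount c0 : ℝ≥0∞) ≠ ∞ :=
      (ENNReal.div_lt_top (ne_top_of_le_ne_top ENNReal.one_ne_top tsub_le_self) hn0).ne
    have hmain := ehit_le_of_drift (compStep p hp lam) (fun c : Conf L => NoResidual c)
      (fun c => pcount c ≤ pcount c0) phi ((1 - 6 * p) / (pcount c0 : ℝ≥0∞))
      (2 * (pcount c0 : ℝ≥0∞)) hε0 hεt
      (fun a ha b hb => by show pcount b ≤ pcount c0; rw [supp_compStep hb]; exact ha)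
      (fun a ha hg => drift_compStep hp6 ha hg)
      c0 le_rfl (phi_le_two_pcount c0)
    refine hmain.trans (le_of_eq ?_)
    rw [div_eq_mul_inv, ENNReal.inv_div (Or.inl hnt) (Or.inl hn0), ← mul_div_assoc]
    congr 1
    ring
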